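/- arXiv:1302.3136 — 4 statements merged into one kernel-verified Lean document; each statement's English description precedes it below -/
import Mathlib

section
/- Let A ∈ ℝ^{p×n} with p < n and B ∈ ℝ^{m×n}, and let U be a matrix whose columns form a basis of the null space of A. Then the stacked matrix [A; B] has full row rank if and only if both A and BU have full row rank. -/
lemma aux_rank_surj {k n : Type*} [Fintype k] [Fintype n] (M : Matrix k n ℝ) :
    M.rank = Fintype.card k ↔ Function.Surjective M.mulVec := by
  have hr : M.rank = Module.finrank ℝ (LinearMap.range M.mulVecLin) := rfl
  have hsurj : Function.Surjective M.mulVec ↔ LinearMap.range M.mulVecLin = ⊤ := by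
    rw [LinearMap.range_eq_top]; rfl
  rw [hsurj, hr]
  constructor
  · intro h
    apply Submodule.eq_top_of_finrank_eq
    rw [h, Module.finrank_fintype_fun_eq_card]
  · intro h
    rw [h, finrank_top, Module.finrank_fintype_fun_eq_card]

/-- For `A : p × n` with `p < n`, `B : m × n`, and `U` a matrix whose
columns form a basis of the null space of `A`, the stacked matrix `[A; B]` has full
row rank iff both `A` and `B * U` have full row rank. -/
theorem stmt0 {p n m : ℕ} (hpn : p < n)
    (A : Matrix (Fin p) (Fin n) ℝ) (B : Matrix (Fin m) (Fin n) ℝ)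
    (U : Matrix (Fin n) (Fin (n - p)) ℝ)
    (hUindep : LinearIndependent ℝ (fun j : Fin (n - p) => fun i : Fin n => U i j))
    (hUspan : ∀ x : Fin n → ℝ, A.mulVec x = 0 ↔ ∃ y : Fin (n - p) → ℝ, U.mulVec y = x) :
    (Matrix.fromRows A B).rank = p + m ↔ (A.rank = p ∧ (B * U).rank = m) := by
  have hfr : (Matrix.fromRows A B).rank = p + m ↔
      Function.Surjective (Matrix.fromRows A B).mulVec := by
    have := aux_rank_surj (Matrix.fromRows A B)
    simpa using this
  have hA : A.rank = p ↔ Function.Surjective A.mulVec := by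
    simpa using aux_rank_surj A
  have hBU : (B * U).rank = m ↔ Function.Surjective (B * U).mulVec := by
    simpa using aux_rank_surj (B * U)
  rw [hfr, hA, hBU]
  constructor
  · intro hs
    constructor
    · intro a
      obtain ⟨x, hx⟩ := hs (Sum.elim a 0)
      rw [Matrix.fromRows_mulVec] at hx
      exact ⟨x, by funext i; exact congrFun hx (Sum.inl i)⟩
    · intro b
      obtain ⟨x, hx⟩ := hs (Sum.elim 0 b)
      rw [Matrix.fromRows_mulVec] at hx
      have hAx : A.mulVec x = 0 := by funext i; exact congrFun hx (Sum.inl i)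
      obtain ⟨y, hy⟩ := (hUspan x).mp hAx
      refine ⟨y, ?_⟩
      rw [← Matrix.mulVec_mulVec, hy]
      funext i; exact congrFun hx (Sum.inr i)
  · rintro ⟨hAs, hBUs⟩ c
    obtain ⟨x, hx⟩ := hAs (fun i => c (Sum.inl i))
    obtain ⟨y, hy⟩ := hBUs ((fun i => c (Sum.inr i)) - B.mulVec x)
    refine ⟨x + U.mulVec y, ?_⟩
    rw [Matrix.fromRows_mulVec]
    have hker : A.mulVec (U.mulVec y) = 0 := (hUspan _).mpr ⟨y, rfl⟩
    rw [← Matrix.mulVec_mulVec] at hy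
    funext i
    cases i with
    | inl i =>
      simp [Matrix.mulVec_add, hker, hx]
    | inr i =>
      have : B.mulVec (x + U.mulVec y) = c ∘ Sum.inr := by
        rw [Matrix.mulVec_add, hy]
        funext j; simp
      simpa using congrFun this i
end

section
/- For all real numbers c, d ≥ 0, t > 0 and β ≥ 0, the inequality (β c² d + 2 t d³)² ≤ (4(1+β)²/t) (c² + t d²)³ holds. -/
/-- For `c, d ≥ 0`, `t > 0`, `β ≥ 0`,
`(β c² d + 2 t d³)² ≤ (4(1+β)²/t)(c² + t d²)³`. -/
theorem stmt1 (c d t β : ℝ) (hc : 0 ≤ c) (hd : 0 ≤ d) (ht : 0 < t) (hβ : 0 ≤ β) :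
    (β * c ^ 2 * d + 2 * t * d ^ 3) ^ 2 ≤
      (4 * (1 + β) ^ 2 / t) * (c ^ 2 + t * d ^ 2) ^ 3 := by
  rw [div_mul_eq_mul_div, le_div_iff₀ ht]
  set u := c ^ 2 with hu
  set v := t * d ^ 2 with hv
  have hu0 : 0 ≤ u := sq_nonneg c
  have hv0 : 0 ≤ v := mul_nonneg ht.le (sq_nonneg d)
  have heq : (β * c ^ 2 * d + 2 * t * d ^ 3) ^ 2 * t = v * (β * u + 2 * v) ^ 2 := by
    rw [hu, hv]; ring
  rw [heq]
  have h1 : β * u + 2 * v ≤ 2 * (1 + β) * (u + v) := by nlinarith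
  have h2 : (β * u + 2 * v) ^ 2 ≤ (2 * (1 + β) * (u + v)) ^ 2 := by
    apply pow_le_pow_left₀ (by positivity) h1
  calc v * (β * u + 2 * v) ^ 2 ≤ (u + v) * (2 * (1 + β) * (u + v)) ^ 2 := by
        apply mul_le_mul (by linarith) h2 (by positivity) (by linarith)
    _ = 4 * (1 + β) ^ 2 * (u + v) ^ 3 := by ring
end

section
/- If nonnegative reals satisfy |T| ≤ β c² d + 2 t d³ where c² = h'∇²ψ(x)h and d² is the barrier Hessian quadratic form, then |T| ≤ (2(1+β)/√t) (c² + t d²)^{3/2}. More precisely: for c, d ≥ 0, t > 0, β ≥ 0, one has β c² d + 2 t d³ ≤ (2(1+β)/√t)(c² + t d²)^{3/2}. -/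
/-- For `c, d ≥ 0`, `t > 0`, `β ≥ 0`,
`β c² d + 2 t d³ ≤ (2(1+β)/√t)(c² + t d²)^{3/2}`. -/
theorem stmt2 (c d t β : ℝ) (hc : 0 ≤ c) (hd : 0 ≤ d) (ht : 0 < t) (hβ : 0 ≤ β) :
    β * c ^ 2 * d + 2 * t * d ^ 3 ≤
      (2 * (1 + β) / Real.sqrt t) * (c ^ 2 + t * d ^ 2) ^ ((3 : ℝ) / 2) := by
  set s := c ^ 2 + t * d ^ 2 with hs_def
  have hs : 0 ≤ s := by positivity
  have hpow : s ^ ((3 : ℝ) / 2) = Real.sqrt s ^ 3 := by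
    rw [Real.sqrt_eq_rpow, ← Real.rpow_natCast (s ^ ((1:ℝ)/2)) 3,
      ← Real.rpow_mul hs]
    norm_num
  rw [hpow]
  set r := Real.sqrt s with hr_def
  set u := Real.sqrt t with hu_def
  have hu : 0 < u := Real.sqrt_pos.mpr ht
  have hu2 : u ^ 2 = t := Real.sq_sqrt ht.le
  have hr2 : r ^ 2 = s := Real.sq_sqrt hs
  have hr : 0 ≤ r := Real.sqrt_nonneg _
  have hdu : d * u ≤ r := by
    have h1 : d * u = Real.sqrt (d ^ 2 * t) := by
      rw [Real.sqrt_mul (by positivity), Real.sqrt_sq hd]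
    rw [h1]
    exact Real.sqrt_le_sqrt (by nlinarith [sq_nonneg c])
  have hc2 : c ^ 2 ≤ r ^ 2 := by nlinarith [sq_nonneg d]
  rw [div_mul_eq_mul_div, le_div_iff₀ hu]
  have hdu3 : (d * u) ^ 3 ≤ r ^ 3 := pow_le_pow_left₀ (by positivity) hdu 3
  nlinarith [mul_le_mul hc2 hdu (by positivity) (by positivity : (0:ℝ) ≤ r ^ 2),
    mul_nonneg hβ (mul_nonneg (sq_nonneg c) (mul_nonneg hd hu.le))]
end

section
/- Let H be symmetric positive definite, A ∈ ℝ^{p×n} full row rank, B ∈ ℝ^{m×n}, and suppose the stacked matrix [A; B] has full row rank. Then the matrix B(H^{−1} − H^{−1}Aᵀ(AH^{−1}Aᵀ)^{−1}AH^{−1})Bᵀ is positive definite. -/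
open scoped Matrix

open Matrix
lemma aux_inj {m₀ : Type*} [Fintype m₀] [DecidableEq m₀] {n : ℕ}
    (M : Matrix m₀ (Fin n) ℝ) (h : M.rank = Fintype.card m₀) {v : m₀ → ℝ}
    (hv : Mᵀ *ᵥ v = 0) : v = 0 := by
  have hr : Mᵀ.rank = Fintype.card m₀ := by rw [Matrix.rank_transpose, h]
  have hrn := Mᵀ.mulVecLin.finrank_range_add_finrank_ker
  rw [Module.finrank_pi] at hrn
  have hker : LinearMap.ker Mᵀ.mulVecLin = ⊥ := by
    rw [← Submodule.finrank_eq_zero]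
    unfold Matrix.rank at hr
    omega
  have hv' : v ᵥ* M = 0 := by rwa [← Matrix.mulVec_transpose]
  exact LinearMap.ker_eq_bot.mp hker (by simpa using hv')

lemma aux_pd {n m₀ : Type*} [Fintype n] [Fintype m₀] {Hi : Matrix n n ℝ}
    (hHi : Hi.PosDef) (C : Matrix n m₀ ℝ) (hC : ∀ z, C *ᵥ z = 0 → z = 0) :
    (Cᵀ * Hi * C).PosDef := by
  have hs : Hiᵀ = Hi := hHi.isHermitian.eq
  refine Matrix.PosDef.of_dotProduct_mulVec_pos ?_ ?_
  · show (Cᵀ * Hi * C)ᴴ = _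
    simp [Matrix.conjTranspose_mul, Matrix.conjTranspose_eq_transpose_of_trivial,
      Matrix.mul_assoc, hs]
  · intro z hz
    have hx : C *ᵥ z ≠ 0 := fun h => hz (hC z h)
    have : z ⬝ᵥ (Cᵀ * Hi * C) *ᵥ z = (C *ᵥ z) ⬝ᵥ Hi *ᵥ (C *ᵥ z) := by
      rw [← Matrix.mulVec_mulVec, ← Matrix.mulVec_mulVec,
        Matrix.dotProduct_mulVec z, Matrix.vecMul_transpose]
    simpa [this] using hHi.dotProduct_mulVec_pos hx

/-- For `H` symmetric positive definite, `A` of full row rank, `B`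
arbitrary with the stacked matrix `[A; B]` of full row rank, the dual Hessian
`B(H⁻¹ − H⁻¹Aᵀ(AH⁻¹Aᵀ)⁻¹AH⁻¹)Bᵀ` is positive definite. -/
theorem stmt19 {n p m : ℕ} (H : Matrix (Fin n) (Fin n) ℝ) (hH : H.PosDef)
    (A : Matrix (Fin p) (Fin n) ℝ) (hA : A.rank = p)
    (B : Matrix (Fin m) (Fin n) ℝ)
    (hAB : (Matrix.fromRows A B).rank = p + m) :
    (B * (H⁻¹ - H⁻¹ * Aᵀ * (A * H⁻¹ * Aᵀ)⁻¹ * A * H⁻¹) * Bᵀ).PosDef := by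
  have hHi : (H⁻¹).PosDef := hH.inv
  have hHis : (H⁻¹)ᵀ = H⁻¹ := hHi.isHermitian.eq
  -- M := A * H⁻¹ * Aᵀ is positive definite
  have hM : (A * H⁻¹ * Aᵀ).PosDef := by
    have := aux_pd hHi Aᵀ (fun v hv => aux_inj A (by simpa using hA) hv)
    simpa [Matrix.transpose_transpose] using this
  have hMs : (A * H⁻¹ * Aᵀ)ᵀ = A * H⁻¹ * Aᵀ := hM.isHermitian.eq
  set Mi := (A * H⁻¹ * Aᵀ)⁻¹ with hMidef
  have hMis : Miᵀ = Mi := by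
    rw [hMidef, Matrix.transpose_nonsing_inv, hMs]
  have hMdet : IsUnit (A * H⁻¹ * Aᵀ).det := (Matrix.isUnit_iff_isUnit_det _).mp hM.isUnit
  have hcancel : Mi * (A * H⁻¹ * Aᵀ) * Mi = Mi := by
    rw [hMidef, Matrix.nonsing_inv_mul _ hMdet, Matrix.one_mul]
  set K : Matrix (Fin n) (Fin n) ℝ := 1 - Aᵀ * Mi * A * H⁻¹ with hKdef
  have hKs : Kᵀ = 1 - H⁻¹ * Aᵀ * Mi * A := by
    simp [hKdef, Matrix.transpose_sub, Matrix.transpose_mul, hHis, hMis, Matrix.mul_assoc]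
  have hG : Kᵀ * H⁻¹ * K = H⁻¹ - H⁻¹ * Aᵀ * Mi * A * H⁻¹ := by
    rw [hKs, hKdef]
    simp only [Matrix.sub_mul, Matrix.mul_sub, Matrix.one_mul, Matrix.mul_one]
    have e1 : H⁻¹ * (Aᵀ * Mi * A * H⁻¹) = H⁻¹ * Aᵀ * Mi * A * H⁻¹ := by
      simp only [Matrix.mul_assoc]
    have e2 : H⁻¹ * Aᵀ * Mi * A * H⁻¹ * (Aᵀ * Mi * A * H⁻¹)
        = H⁻¹ * Aᵀ * Mi * A * H⁻¹ := by
      have h2 : H⁻¹ * Aᵀ * (Mi * (A * H⁻¹ * Aᵀ) * Mi) * (A * H⁻¹)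
          = H⁻¹ * Aᵀ * Mi * (A * H⁻¹) := by rw [hcancel]
      calc H⁻¹ * Aᵀ * Mi * A * H⁻¹ * (Aᵀ * Mi * A * H⁻¹)
          = H⁻¹ * Aᵀ * (Mi * (A * H⁻¹ * Aᵀ) * Mi) * (A * H⁻¹) := by
            simp only [Matrix.mul_assoc]
        _ = H⁻¹ * Aᵀ * Mi * (A * H⁻¹) := h2
        _ = H⁻¹ * Aᵀ * Mi * A * H⁻¹ := by simp only [Matrix.mul_assoc]
    rw [e2, e1]
    abel
  have hfact : B * (H⁻¹ - H⁻¹ * Aᵀ * Mi * A * H⁻¹) * Bᵀ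
      = (K * Bᵀ)ᵀ * H⁻¹ * (K * Bᵀ) := by
    rw [← hG, Matrix.transpose_mul, Matrix.transpose_transpose]
    simp only [Matrix.mul_assoc]
  rw [hfact]
  refine aux_pd hHi (K * Bᵀ) ?_
  intro z hz
  -- from K *ᵥ (Bᵀ *ᵥ z) = 0 deduce Bᵀ *ᵥ z = Aᵀ *ᵥ w
  have hz' : Bᵀ *ᵥ z = Aᵀ *ᵥ ((Mi * A * H⁻¹ * Bᵀ) *ᵥ z) := by
    have := hz
    rw [hKdef] at this
    rw [← Matrix.mulVec_mulVec] at this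
    simp only [Matrix.sub_mulVec, Matrix.one_mulVec, sub_eq_zero] at this
    rw [this]
    simp only [Matrix.mulVec_mulVec, Matrix.mul_assoc]
  set w := (Mi * A * H⁻¹ * Bᵀ) *ᵥ z with hwdef
  have hsum : (Matrix.fromRows A B)ᵀ *ᵥ (Sum.elim w (-z)) = 0 := by
    rw [Matrix.transpose_fromRows, Matrix.fromCols_mulVec_sumElim]
    rw [Matrix.mulVec_neg, ← hz']
    simp
  have := aux_inj (Matrix.fromRows A B) (by simpa using hAB) hsum
  have hzz : -z = 0 := funext fun i => congrFun this (Sum.inr i)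
  simpa using hzz
end
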